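/- Fix d ≥ 1 and permutations p_x, p_y of Fin d, and let (m_A, m_B) be the M-Origami pair associated to (p_x, p_y). Then the multiset of cardinalities of the orbits of ⟨m_A⟩ on (Fin 4) × (Fin d) is obtained from the multiset of cardinalities of the orbits of ⟨p_y⟩ on Fin d by doubling each cardinality and taking each resulting value with twice its multiplicity; i.e., every orbit of ⟨p_y⟩ of cardinality l gives rise to exactly two orbits of ⟨m_A⟩ of cardinality 2l, and all orbits of ⟨m_A⟩ arise this way. (This describes the horizontal cylinder structure of the M-Origami.) -/

import Mathlib

/-- `m_A` of the M-Origami pair associated to `(p_x, p_y)`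
(squares labelled `0,1,2,3` instead of `1,2,3,4`):
`m_A (0,j) = (1,j)`, `m_A (1,j) = (0, p_y j)`, `m_A (2,j) = (3,j)`, `m_A (3,j) = (2, p_y⁻¹ j)`. -/
def mOrigamiA {d : ℕ} (py : Equiv.Perm (Fin d)) : Equiv.Perm (Fin 4 × Fin d) :=
  Equiv.prodShear (Equiv.swap 0 1 * Equiv.swap 2 3 : Equiv.Perm (Fin 4))
    (fun i => if i = 1 then py else if i = 3 then py⁻¹ else Equiv.refl (Fin d))

/-- `m_B` of the M-Origami pair associated to `(p_x, p_y)`: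
`m_B (0,j) = (2,j)`, `m_B (1,j) = (3,j)`, `m_B (2,j) = (0, p_x⁻¹ j)`, `m_B (3,j) = (1, p_x j)`. -/
def mOrigamiB {d : ℕ} (px : Equiv.Perm (Fin d)) : Equiv.Perm (Fin 4 × Fin d) :=
  Equiv.prodShear (Equiv.swap 0 2 * Equiv.swap 1 3 : Equiv.Perm (Fin 4))
    (fun i => if i = 2 then px⁻¹ else if i = 3 then px else Equiv.refl (Fin d))

section Aux

lemma zpow_succ_apply {α : Type*} (σ : Equiv.Perm α) (k : ℤ) (x : α) :
    (σ ^ (k + 1)) x = σ ((σ ^ k) x) := by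
  rw [add_comm, zpow_add, zpow_one, Equiv.Perm.mul_apply]

lemma zpow_pred_apply {α : Type*} (σ : Equiv.Perm α) (k : ℤ) (x : α) :
    (σ ^ (k - 1)) x = σ⁻¹ ((σ ^ k) x) := by
  rw [show k - 1 = -1 + k by ring, zpow_add, zpow_neg_one, Equiv.Perm.mul_apply]

lemma mem_orbit_zpowers_iff {α : Type*} {σ : Equiv.Perm α} {x y : α} :
    x ∈ MulAction.orbit (Subgroup.zpowers σ) y ↔ ∃ n : ℤ, (σ ^ n) y = x := by
  constructor
  · rintro ⟨⟨g, hg⟩, rfl⟩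
    obtain ⟨n, rfl⟩ := Subgroup.mem_zpowers_iff.mp hg
    exact ⟨n, rfl⟩
  · rintro ⟨n, rfl⟩
    exact ⟨⟨σ ^ n, Subgroup.mem_zpowers_iff.mpr ⟨n, rfl⟩⟩, rfl⟩

variable {d : ℕ} (py : Equiv.Perm (Fin d))

lemma mA_zero (j : Fin d) : mOrigamiA py (0, j) = (1, j) := by
  simp [mOrigamiA, Equiv.prodShear]
  decide

lemma mA_one (j : Fin d) : mOrigamiA py (1, j) = (0, py j) := by
  simp [mOrigamiA, Equiv.prodShear]
  decide

lemma mA_two (j : Fin d) : mOrigamiA py (2, j) = (3, j) := by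
  simp [mOrigamiA, Equiv.prodShear]
  decide

lemma mA_three (j : Fin d) : mOrigamiA py (3, j) = (2, py⁻¹ j) := by
  simp [mOrigamiA, Equiv.prodShear]
  decide

lemma mA_inv_one (j : Fin d) : (mOrigamiA py)⁻¹ (1, j) = (0, j) := by
  rw [← mA_zero py j, Equiv.Perm.coe_inv (mOrigamiA py), Equiv.symm_apply_apply]

lemma mA_inv_zero (j : Fin d) : (mOrigamiA py)⁻¹ (0, j) = (1, py⁻¹ j) := by
  conv_lhs => rw [show ((0 : Fin 4), j) = mOrigamiA py (1, py⁻¹ j) by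
    rw [mA_one, Equiv.Perm.coe_inv py, Equiv.apply_symm_apply]]
  rw [Equiv.Perm.coe_inv (mOrigamiA py), Equiv.symm_apply_apply]

lemma mA_inv_three (j : Fin d) : (mOrigamiA py)⁻¹ (3, j) = (2, j) := by
  rw [← mA_two py j, Equiv.Perm.coe_inv (mOrigamiA py), Equiv.symm_apply_apply]

lemma mA_inv_two (j : Fin d) : (mOrigamiA py)⁻¹ (2, j) = (3, py j) := by
  conv_lhs => rw [show ((2 : Fin 4), j) = mOrigamiA py (3, py j) by
    rw [mA_three, Equiv.Perm.coe_inv py, Equiv.symm_apply_apply]]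
  rw [Equiv.Perm.coe_inv (mOrigamiA py), Equiv.symm_apply_apply]

lemma mA_zpow_top (j : Fin d) (k : ℤ) :
    ∃ n : ℤ, (mOrigamiA py ^ k) (0, j) = (0, (py ^ n) j) ∨
      (mOrigamiA py ^ k) (0, j) = (1, (py ^ n) j) := by
  induction k using Int.induction_on with
  | zero => exact ⟨0, Or.inl (by simp)⟩
  | succ k ih =>
    obtain ⟨n, h | h⟩ := ih
    · exact ⟨n, Or.inr (by rw [zpow_succ_apply, h, mA_zero])⟩
    · exact ⟨n + 1, Or.inl (by rw [zpow_succ_apply, h, mA_one, ← zpow_succ_apply])⟩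
  | pred k ih =>
    obtain ⟨n, h | h⟩ := ih
    · exact ⟨n - 1, Or.inr (by rw [zpow_pred_apply, h, mA_inv_zero, ← zpow_pred_apply])⟩
    · exact ⟨n, Or.inl (by rw [zpow_pred_apply, h, mA_inv_one])⟩

lemma mA_zpow_bot (j : Fin d) (k : ℤ) :
    ∃ n : ℤ, (mOrigamiA py ^ k) (2, j) = (2, (py ^ n) j) ∨
      (mOrigamiA py ^ k) (2, j) = (3, (py ^ n) j) := by
  induction k using Int.induction_on with
  | zero => exact ⟨0, Or.inl (by simp)⟩
  | succ k ih =>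
    obtain ⟨n, h | h⟩ := ih
    · exact ⟨n, Or.inr (by rw [zpow_succ_apply, h, mA_two])⟩
    · exact ⟨n - 1, Or.inl (by rw [zpow_succ_apply, h, mA_three, ← zpow_pred_apply])⟩
  | pred k ih =>
    obtain ⟨n, h | h⟩ := ih
    · exact ⟨n + 1, Or.inr (by rw [zpow_pred_apply, h, mA_inv_two, ← zpow_succ_apply])⟩
    · exact ⟨n, Or.inl (by rw [zpow_pred_apply, h, mA_inv_three])⟩

lemma mA_zpow_even_top (j : Fin d) (n : ℤ) :
    (mOrigamiA py ^ (2 * n)) (0, j) = (0, (py ^ n) j) := by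
  induction n using Int.induction_on with
  | zero => simp
  | succ n ih =>
    rw [show 2 * (n + 1 : ℤ) = 2 * n + 1 + 1 by ring, zpow_succ_apply, zpow_succ_apply, ih,
      mA_zero, mA_one, ← zpow_succ_apply]
  | pred n ih =>
    rw [show 2 * (-n - 1 : ℤ) = 2 * (-n) - 1 - 1 by ring, zpow_pred_apply, zpow_pred_apply, ih,
      mA_inv_zero, mA_inv_one, ← zpow_pred_apply]

lemma mA_zpow_even_bot (j : Fin d) (n : ℤ) :
    (mOrigamiA py ^ (2 * n)) (2, j) = (2, (py ^ (-n)) j) := by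
  induction n using Int.induction_on with
  | zero => simp
  | succ n ih =>
    rw [show 2 * (n + 1 : ℤ) = 2 * n + 1 + 1 by ring, zpow_succ_apply, zpow_succ_apply, ih,
      mA_two, mA_three, show (-(n + 1) : ℤ) = -n - 1 by ring, ← zpow_pred_apply]
  | pred n ih =>
    rw [show 2 * (-n - 1 : ℤ) = 2 * (-n) - 1 - 1 by ring, zpow_pred_apply, zpow_pred_apply, ih,
      mA_inv_two, mA_inv_three, show (-(-n - 1) : ℤ) = -(-n) + 1 by ring, ← zpow_succ_apply]

lemma orbit_top (j : Fin d) :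
    MulAction.orbit (Subgroup.zpowers (mOrigamiA py)) ((0 : Fin 4), j)
      = ({0, 1} : Set (Fin 4)) ×ˢ MulAction.orbit (Subgroup.zpowers py) j := by
  ext ⟨i, x⟩
  simp only [Set.mem_prod, Set.mem_insert_iff, Set.mem_singleton_iff, mem_orbit_zpowers_iff]
  constructor
  · rintro ⟨k, hk⟩
    obtain ⟨n, h | h⟩ := mA_zpow_top py j k <;> rw [h, Prod.mk.injEq] at hk <;>
      obtain ⟨h1, h2⟩ := hk
    · exact ⟨Or.inl h1.symm, n, h2⟩
    · exact ⟨Or.inr h1.symm, n, h2⟩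
  · rintro ⟨hi, n, rfl⟩
    rcases hi with rfl | rfl
    · exact ⟨2 * n, mA_zpow_even_top py j n⟩
    · exact ⟨2 * n + 1, by rw [zpow_succ_apply, mA_zpow_even_top, mA_zero]⟩

lemma orbit_bot (j : Fin d) :
    MulAction.orbit (Subgroup.zpowers (mOrigamiA py)) ((2 : Fin 4), j)
      = ({2, 3} : Set (Fin 4)) ×ˢ MulAction.orbit (Subgroup.zpowers py) j := by
  ext ⟨i, x⟩
  simp only [Set.mem_prod, Set.mem_insert_iff, Set.mem_singleton_iff, mem_orbit_zpowers_iff]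
  constructor
  · rintro ⟨k, hk⟩
    obtain ⟨n, h | h⟩ := mA_zpow_bot py j k <;> rw [h, Prod.mk.injEq] at hk <;>
      obtain ⟨h1, h2⟩ := hk
    · exact ⟨Or.inl h1.symm, n, h2⟩
    · exact ⟨Or.inr h1.symm, n, h2⟩
  · rintro ⟨hi, n, rfl⟩
    rcases hi with rfl | rfl
    · exact ⟨2 * (-n), by rw [mA_zpow_even_bot, neg_neg]⟩
    · exact ⟨2 * (-n) + 1, by rw [zpow_succ_apply, mA_zpow_even_bot, neg_neg, mA_two]⟩

lemma orbit_one' (j : Fin d) :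
    MulAction.orbit (Subgroup.zpowers (mOrigamiA py)) ((1 : Fin 4), j)
      = ({0, 1} : Set (Fin 4)) ×ˢ MulAction.orbit (Subgroup.zpowers py) j := by
  rw [← orbit_top]
  exact MulAction.orbit_eq_iff.mpr
    (mem_orbit_zpowers_iff.mpr ⟨1, by rw [zpow_one, mA_zero]⟩)

lemma orbit_three' (j : Fin d) :
    MulAction.orbit (Subgroup.zpowers (mOrigamiA py)) ((3 : Fin 4), j)
      = ({2, 3} : Set (Fin 4)) ×ˢ MulAction.orbit (Subgroup.zpowers py) j := by
  rw [← orbit_bot]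
  exact MulAction.orbit_eq_iff.mpr
    (mem_orbit_zpowers_iff.mpr ⟨1, by rw [zpow_one, mA_two]⟩)

lemma card_prod_pair {a b : Fin 4} (hab : a ≠ b) (s : Set (Fin d)) :
    Nat.card (({a, b} : Set (Fin 4)) ×ˢ s) = 2 * Nat.card s := by
  rw [Nat.card_congr (Equiv.Set.prod _ _), Nat.card_prod]
  congr 1
  rw [Nat.card_coe_set_eq, Set.ncard_pair hab]

lemma orbit_all (i : Fin 4) (j : Fin d) :
    MulAction.orbit (Subgroup.zpowers (mOrigamiA py)) (i, j)
      = (if (i : ℕ) ≤ 1 then ({0, 1} : Set (Fin 4)) else {2, 3})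
          ×ˢ MulAction.orbit (Subgroup.zpowers py) j := by
  rcases i with ⟨iv, hi⟩
  interval_cases iv
  · rw [show (⟨0, hi⟩ : Fin 4) = 0 from rfl, orbit_top, if_pos (by decide)]
  · rw [show (⟨1, hi⟩ : Fin 4) = 1 from rfl, orbit_one', if_pos (by decide)]
  · rw [show (⟨2, hi⟩ : Fin 4) = 2 from rfl, orbit_bot, if_neg (by decide)]
  · rw [show (⟨3, hi⟩ : Fin 4) = 3 from rfl, orbit_three', if_neg (by decide)]

lemma card_orbit_all (i : Fin 4) (j : Fin d) :
    Nat.card (MulAction.orbit (Subgroup.zpowers (mOrigamiA py)) (i, j))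
      = 2 * Nat.card (MulAction.orbit (Subgroup.zpowers py) j) := by
  rcases i with ⟨iv, hi⟩
  interval_cases iv
  · rw [show (⟨0, hi⟩ : Fin 4) = 0 from rfl, orbit_top]
    exact card_prod_pair (by decide) _
  · rw [show (⟨1, hi⟩ : Fin 4) = 1 from rfl, orbit_one']
    exact card_prod_pair (by decide) _
  · rw [show (⟨2, hi⟩ : Fin 4) = 2 from rfl, orbit_bot]
    exact card_prod_pair (by decide) _
  · rw [show (⟨3, hi⟩ : Fin 4) = 3 from rfl, orbit_three']
    exact card_prod_pair (by decide) _

noncomputable def quotEquiv :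
    MulAction.orbitRel.Quotient (Subgroup.zpowers (mOrigamiA py)) (Fin 4 × Fin d)
      ≃ MulAction.orbitRel.Quotient (Subgroup.zpowers py) (Fin d)
        ⊕ MulAction.orbitRel.Quotient (Subgroup.zpowers py) (Fin d) where
  toFun := Quotient.lift
    (fun x => if (x.1 : ℕ) ≤ 1 then Sum.inl (Quotient.mk'' x.2) else Sum.inr (Quotient.mk'' x.2))
    (by
      intro a b hab
      have h : a ∈ MulAction.orbit (Subgroup.zpowers (mOrigamiA py)) b :=
        MulAction.orbitRel_apply.mp hab
      obtain ⟨i, j⟩ := a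
      obtain ⟨i', j'⟩ := b
      rw [orbit_all] at h
      obtain ⟨h1, h2⟩ := h
      have hq : (Quotient.mk'' j : MulAction.orbitRel.Quotient (Subgroup.zpowers py) (Fin d))
          = Quotient.mk'' j' := Quotient.sound' (MulAction.orbitRel_apply.mpr h2)
      by_cases hc : (i' : ℕ) ≤ 1
      · rw [if_pos hc] at h1
        have : (i : ℕ) ≤ 1 := by
          rcases h1 with rfl | rfl <;> decide
        simp only [if_pos hc, if_pos this, hq]
      · rw [if_neg hc] at h1
        have : ¬ (i : ℕ) ≤ 1 := by
          rcases h1 with rfl | rfl <;> decide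
        simp only [if_neg hc, if_neg this, hq])
  invFun := Sum.elim
    (Quotient.map' (fun j => ((0 : Fin 4), j)) (by
      intro a b hab
      exact MulAction.orbitRel_apply.mpr (by
        rw [orbit_top]
        exact ⟨Or.inl rfl, MulAction.orbitRel_apply.mp hab⟩)))
    (Quotient.map' (fun j => ((2 : Fin 4), j)) (by
      intro a b hab
      exact MulAction.orbitRel_apply.mpr (by
        rw [orbit_bot]
        exact ⟨Or.inl rfl, MulAction.orbitRel_apply.mp hab⟩)))
  left_inv := by
    intro ω
    induction ω using Quotient.inductionOn' with
    | h x =>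
      obtain ⟨i, j⟩ := x
      by_cases hc : (i : ℕ) ≤ 1
      · show Sum.elim _ _ (if (i : ℕ) ≤ 1 then _ else _) = _
        rw [if_pos hc]
        refine Quotient.sound' (MulAction.orbitRel_apply.mpr ?_)
        rw [orbit_all, if_pos hc]
        exact ⟨Or.inl rfl, MulAction.mem_orbit_self j⟩
      · show Sum.elim _ _ (if (i : ℕ) ≤ 1 then _ else _) = _
        rw [if_neg hc]
        refine Quotient.sound' (MulAction.orbitRel_apply.mpr ?_)
        rw [orbit_all, if_neg hc]
        exact ⟨Or.inl rfl, MulAction.mem_orbit_self j⟩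
  right_inv := by
    rintro (ω | ω) <;> induction ω using Quotient.inductionOn' with
    | h j => rfl

end Aux

open scoped Classical in
/-- The multiset of cardinalities of the orbits of `⟨σ⟩` on `S`. -/
noncomputable def orbitCards {S : Type*} [Fintype S] (σ : Equiv.Perm S) : Multiset ℕ :=
  (Finset.univ : Finset (MulAction.orbitRel.Quotient (Subgroup.zpowers σ) S)).val.map
    fun ω => Nat.card ω.orbit

lemma univ_val_indep {X : Type*} (i1 i2 : Fintype X) :
    (@Finset.univ X i1).val = (@Finset.univ X i2).val := by
  cases Subsingleton.elim i1 i2; rfl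


/-- Horizontal cylinder structure of an M-Origami: every orbit of `⟨p_y⟩` of cardinality `l`
gives rise to exactly two orbits of `⟨m_A⟩` of cardinality `2l`, and all orbits of `⟨m_A⟩`
arise this way. -/
theorem mOrigami_cylinders {d : ℕ} (hd : 1 ≤ d) (px py : Equiv.Perm (Fin d)) :
    orbitCards (mOrigamiA py) = (orbitCards py + orbitCards py).map (fun l => 2 * l) := by
  classical
  set ΩA := MulAction.orbitRel.Quotient (Subgroup.zpowers (mOrigamiA py)) (Fin 4 × Fin d)
  set Ω := MulAction.orbitRel.Quotient (Subgroup.zpowers py) (Fin d)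
  let e : ΩA ≃ Ω ⊕ Ω := quotEquiv py
  let g : Ω ⊕ Ω → ℕ := fun s => 2 * Nat.card (Sum.elim id id s).orbit
  have key : ∀ ω : ΩA, Nat.card ω.orbit = g (e ω) := by
    intro ω
    induction ω using Quotient.inductionOn' with
    | h x =>
      obtain ⟨i, j⟩ := x
      have he : e (Quotient.mk'' (i, j)) =
          if (i : ℕ) ≤ 1 then Sum.inl (Quotient.mk'' j) else Sum.inr (Quotient.mk'' j) := rfl
      rw [he]
      by_cases hc : (i : ℕ) ≤ 1
      · rw [if_pos hc]
        simp only [g, Sum.elim_inl, id_eq]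
        rw [MulAction.orbitRel.Quotient.orbit_mk, MulAction.orbitRel.Quotient.orbit_mk,
          card_orbit_all]
      · rw [if_neg hc]
        simp only [g, Sum.elim_inr, id_eq]
        rw [MulAction.orbitRel.Quotient.orbit_mk, MulAction.orbitRel.Quotient.orbit_mk,
          card_orbit_all]
  unfold orbitCards
  rw [Multiset.map_congr rfl (fun ω _ => key ω)]
  rw [show (fun ω : ΩA => g (e ω)) = g ∘ e from rfl, ← Multiset.map_map]
  have huniv : Multiset.map (⇑e) (Finset.univ : Finset ΩA).val
      = (Finset.univ : Finset (Ω ⊕ Ω)).val := by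
    rw [← Equiv.coe_toEmbedding, ← Finset.map_val, Finset.univ_map_equiv_to_embedding]
  rw [huniv, ← Finset.univ_disjSum_univ, Finset.val_disjSum, Multiset.disjSum]
  simp only [Multiset.map_add, Multiset.map_map]
  congr 1 <;> exact Multiset.map_congr (univ_val_indep _ _) (fun ω _ => rfl)
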